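/- For λ = 0, the sequence d_n/c_n converges as n → ∞ to (J_0(√2) − J_1(√2)/√2)/(3·J_1(√2)/√2 − J_0(√2)). -/

import Mathlib

/-- Bessel function of the first kind of real order `ν`, for real `z > 0`,
defined by the series `∑ (−1)^m / (m! Γ(m+ν+1)) (z/2)^(2m+ν)` (real powers). -/
noncomputable def besselJ (ν z : ℝ) : ℝ :=
  ∑' m : ℕ, ((-1 : ℝ) ^ m / (m.factorial * Real.Gamma ((m : ℝ) + ν + 1)))
      * (z / 2) ^ (2 * (m : ℝ) + ν)

namespace Stmt19Aux

noncomputable def aa (n m : ℕ) : ℝ :=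
  (-1 : ℝ) ^ m / (m.factorial * (m + n).factorial * 2 ^ m)

lemma fact_ge_one (k : ℕ) : (1:ℝ) ≤ k.factorial := by
  exact_mod_cast Nat.one_le_iff_ne_zero.mpr k.factorial_pos.ne'

lemma aa_abs (n m : ℕ) : |aa n m| ≤ (1/2 : ℝ) ^ m := by
  rw [aa, abs_div, abs_pow, abs_neg, abs_one, one_pow]
  rw [abs_of_pos (by positivity), div_le_iff₀ (by positivity), div_pow, one_pow]
  rw [div_mul_eq_mul_div, le_div_iff₀ (by positivity)]
  have h1 := fact_ge_one m
  have h2 := fact_ge_one (m + n)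
  have h3 : (0:ℝ) < 2 ^ m := by positivity
  nlinarith [mul_le_mul h1 h2 (by norm_num) (le_trans zero_le_one h1)]

lemma aa_summable (n : ℕ) : Summable (aa n) :=
  Summable.of_norm_bounded (summable_geometric_of_lt_one (by norm_num) (by norm_num)) (aa_abs n)

noncomputable def FF (n : ℕ) : ℝ := ∑' m, aa n m

lemma aa_key (n m : ℕ) :
    aa (n+2) m + 2 * aa n (m+1) = (2*(n:ℝ)+2) * aa (n+1) (m+1) := by
  simp only [aa]
  have e1 : (m+1) + n = m + n + 1 := by ring
  have e2 : (m+1) + (n+1) = m + n + 2 := by ring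
  have e3 : m + (n+2) = m + n + 2 := by ring
  rw [e1, e2, e3]
  rw [Nat.factorial_succ (m+n+1), Nat.factorial_succ (m+n), Nat.factorial_succ m,
    pow_succ, pow_succ]
  have h1 : (0:ℝ) < m.factorial := by exact_mod_cast m.factorial_pos
  have h2 : (0:ℝ) < (m+n).factorial := by exact_mod_cast (m+n).factorial_pos
  have h3 : (0:ℝ) < 2 ^ m := by positivity
  push_cast
  field_simp
  ring

lemma FF_rec (n : ℕ) : FF (n+2) = (2*(n:ℝ)+2) * FF (n+1) - 2 * FF n := by
  have hs2 := aa_summable (n+2)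
  have hs1 := aa_summable (n+1)
  have hs0 := aa_summable n
  have hs0' : Summable (fun m => aa n (m+1)) := (summable_nat_add_iff 1).mpr hs0
  have hs1' : Summable (fun m => aa (n+1) (m+1)) := (summable_nat_add_iff 1).mpr hs1
  have key : FF (n+2) + 2 * FF n = (2*(n:ℝ)+2) * FF (n+1) := by
    rw [FF, FF, FF, hs0.tsum_eq_zero_add, hs1.tsum_eq_zero_add]
    rw [mul_add, mul_add, ← tsum_mul_left, ← tsum_mul_left]
    have hadd : ∑' (m : ℕ), aa (n + 2) m + ∑' (x : ℕ), 2 * aa n (x + 1)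
        = ∑' (m : ℕ), (aa (n+2) m + 2 * aa n (m+1)) := (Summable.tsum_add hs2 (hs0'.mul_left 2)).symm
    have hcong : ∑' (m : ℕ), (aa (n+2) m + 2 * aa n (m+1))
        = ∑' (m : ℕ), (2*(n:ℝ)+2) * aa (n+1) (m+1) := tsum_congr (fun m => aa_key n m)
    have h0 : 2 * aa n 0 = (2*(n:ℝ)+2) * aa (n + 1) 0 := by
      simp only [aa]
      rw [Nat.zero_add, Nat.zero_add, Nat.factorial_succ n]
      have : (0:ℝ) < n.factorial := by exact_mod_cast n.factorial_pos
      push_cast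
      field_simp
      try ring
    linarith
  linarith

lemma sq_half : (Real.sqrt 2 / 2) ^ 2 = 1/2 := by
  rw [div_pow, Real.sq_sqrt (by norm_num : (0:ℝ) ≤ 2)]
  norm_num

lemma besselJ0_eq : besselJ 0 (Real.sqrt 2) = FF 0 := by
  rw [besselJ, FF]
  refine tsum_congr fun m => ?_
  have hg : Real.Gamma ((m : ℝ) + 0 + 1) = m.factorial := by
    rw [add_zero]
    exact_mod_cast Real.Gamma_nat_eq_factorial m
  have hp : (Real.sqrt 2 / 2) ^ (2 * (m : ℝ) + 0) = (1/2 : ℝ) ^ m := by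
    rw [add_zero]
    have : (2 * (m : ℝ)) = ((2 * m : ℕ) : ℝ) := by push_cast; ring
    rw [this, Real.rpow_natCast, pow_mul, sq_half]
  rw [hg, hp, aa]
  have h1 : (0:ℝ) < m.factorial := by exact_mod_cast m.factorial_pos
  rw [Nat.add_zero]
  rw [div_pow, one_pow]
  field_simp

lemma besselJ1_eq : besselJ 1 (Real.sqrt 2) = (Real.sqrt 2 / 2) * FF 1 := by
  rw [besselJ, FF, ← tsum_mul_left]
  refine tsum_congr fun m => ?_
  have hg : Real.Gamma ((m : ℝ) + 1 + 1) = (m+1).factorial := by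
    have := Real.Gamma_nat_eq_factorial (m+1)
    push_cast at this ⊢
    linarith
  have hp : (Real.sqrt 2 / 2) ^ (2 * (m : ℝ) + 1) = (1/2 : ℝ) ^ m * (Real.sqrt 2 / 2) := by
    have : (2 * (m : ℝ) + 1) = ((2 * m + 1 : ℕ) : ℝ) := by push_cast; ring
    rw [this, Real.rpow_natCast, pow_succ, pow_mul, sq_half]
  rw [hg, hp, aa]
  have h1 : (0:ℝ) < m.factorial := by exact_mod_cast m.factorial_pos
  have h2 : (0:ℝ) < (m+1).factorial := by exact_mod_cast (m+1).factorial_pos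
  rw [div_pow, one_pow]
  field_simp
  try ring

lemma geom_sum : ∑' m : ℕ, (1/2 : ℝ) ^ m = 2 := by
  rw [tsum_geometric_of_lt_one (by norm_num) (by norm_num)]; norm_num

lemma abs_tsum_le (f : ℕ → ℝ) (g : ℕ → ℝ) (hg : Summable g)
    (h : ∀ m, |f m| ≤ g m) : |∑' m, f m| ≤ ∑' m, g m := by
  have hf : Summable f :=
    Summable.of_norm_bounded hg (by simpa [Real.norm_eq_abs] using h)
  have h1 : ‖∑' m, f m‖ ≤ ∑' m, ‖f m‖ :=
    norm_tsum_le_tsum_norm (by simpa [Real.norm_eq_abs] using hf.abs)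
  have h2 : ∑' m, ‖f m‖ ≤ ∑' m, g m := by
    apply Summable.tsum_le_tsum (hf := by simpa [Real.norm_eq_abs] using hf.abs) (hg := hg)
    simpa [Real.norm_eq_abs] using h
  rw [Real.norm_eq_abs] at h1
  linarith

lemma FF_bound (n : ℕ) : |FF n| ≤ 2 := by
  rw [FF, ← geom_sum]
  exact abs_tsum_le _ _ (summable_geometric_of_lt_one (by norm_num) (by norm_num)) (aa_abs n)

lemma tail_bound (n : ℕ) (C : ℝ)
    (h : ∀ m : ℕ, |aa n (m+2)| ≤ C * (1/2)^m) :
    |∑' m : ℕ, aa n (m+2)| ≤ 2 * C := by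
  have hg : Summable (fun m : ℕ => C * (1/2 : ℝ)^m) :=
    (summable_geometric_of_lt_one (by norm_num) (by norm_num)).mul_left C
  have := abs_tsum_le (fun m => aa n (m+2)) _ hg h
  rw [tsum_mul_left, geom_sum] at this
  linarith

lemma FF_split (n : ℕ) : FF n = aa n 0 + aa n 1 + ∑' m, aa n (m+2) := by
  have hs : Summable (fun m => aa n (m+1)) := (summable_nat_add_iff 1).mpr (aa_summable n)
  rw [FF, (aa_summable n).tsum_eq_zero_add, hs.tsum_eq_zero_add]
  exact (add_assoc _ _ _).symm

lemma abs_aa (n m : ℕ) : |aa n m| = 1/(m.factorial * (m + n).factorial * 2 ^ m) := by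
  rw [aa, abs_div, abs_pow, abs_neg, abs_one, one_pow, abs_of_pos (by positivity)]

lemma fact_cast_le {a b : ℕ} (h : a ≤ b) : (a.factorial : ℝ) ≤ b.factorial := by
  exact_mod_cast Nat.factorial_le h

lemma aa_tail_le (n m : ℕ) (a b : ℝ) (ha : 0 < a) (hb : 0 < b)
    (haf : a ≤ (m+2).factorial) (hbf : b ≤ (m+2+n).factorial) :
    |aa n (m+2)| ≤ (1/(4*a*b)) * (1/2)^m := by
  rw [abs_aa]
  have hp : (0:ℝ) < 2^m := by positivity
  calc (1:ℝ)/((m+2).factorial * ((m+2)+n).factorial * 2^(m+2))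
      ≤ 1/(a * b * 2^(m+2)) := by
        apply one_div_le_one_div_of_le (by positivity)
        have hA : (0:ℝ) < (m+2).factorial := lt_of_lt_of_le ha haf
        have h2 : (0:ℝ) < 2^(m+2) := by positivity
        nlinarith [mul_le_mul haf hbf hb.le hA.le]
    _ = (1/(4*a*b)) * (1/2)^m := by
        rw [div_pow, one_pow]
        rw [pow_add]
        field_simp
        ring

lemma FF0_bounds : |FF 0 - 1/2| ≤ 1/8 := by
  have h := FF_split 0
  have h00 : aa 0 0 = 1 := by norm_num [aa, Nat.factorial]
  have h01 : aa 0 1 = -(1/2) := by norm_num [aa, Nat.factorial]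
  have ht : |∑' m, aa 0 (m+2)| ≤ 2 * (1/16) := by
    apply tail_bound 0 (1/16)
    intro m
    have := aa_tail_le 0 m 2 2 (by norm_num) (by norm_num)
      (by have := fact_cast_le (show 2 ≤ m+2 by omega); norm_num [Nat.factorial] at this; exact_mod_cast this)
      (by have := fact_cast_le (show 2 ≤ m+2+0 by omega); norm_num [Nat.factorial] at this; exact_mod_cast this)
    convert this using 2
    norm_num
  rw [h, h00, h01]
  have := abs_le.mp ht
  rw [abs_le]
  constructor <;> linarith [this.1, this.2]

lemma FF1_bounds : |FF 1 - 3/4| ≤ 1/12 := by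
  have h := FF_split 1
  have h00 : aa 1 0 = 1 := by norm_num [aa, Nat.factorial]
  have h01 : aa 1 1 = -(1/4) := by norm_num [aa, Nat.factorial]
  have ht : |∑' m, aa 1 (m+2)| ≤ 2 * (1/48) := by
    apply tail_bound 1 (1/48)
    intro m
    have := aa_tail_le 1 m 2 6 (by norm_num) (by norm_num)
      (by have := fact_cast_le (show 2 ≤ m+2 by omega); norm_num [Nat.factorial] at this; exact_mod_cast this)
      (by have := fact_cast_le (show 3 ≤ m+2+1 by omega); norm_num [Nat.factorial] at this; exact_mod_cast this)
    convert this using 2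
    norm_num
  rw [h, h00, h01]
  have := abs_le.mp ht
  rw [abs_le]
  constructor <;> linarith [this.1, this.2]

lemma DD_pos : (3:ℝ)/4 ≤ 3 * FF 1 - 2 * FF 0 := by
  have h0 := abs_le.mp FF0_bounds
  have h1 := abs_le.mp FF1_bounds
  linarith [h0.1, h0.2, h1.1, h1.2]


lemma key_identity (c d : ℕ → ℝ)
    (hc1 : c 1 = 5) (hc2 : c 2 = 28) (hc3 : c 3 = 226)
    (hd1 : d 1 = 1) (hd2 : d 2 = 8) (hd3 : d 3 = 66)
    (hcrec : ∀ n : ℕ, 4 ≤ n →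
      c n = (2 * (n : ℝ) + 3) * c (n - 1) - (2 * ((n : ℝ) - 2) + 4) * c (n - 2)
            + 2 * c (n - 3))
    (hdrec : ∀ n : ℕ, 4 ≤ n →
      d n = (2 * (n : ℝ) + 3) * d (n - 1) - (2 * ((n : ℝ) - 2) + 4) * d (n - 2)
            + 2 * d (n - 3)) :
    ∀ k : ℕ,
      ((3*FF 1 - 2*FF 0) * d (k+1) - (2*FF 0 - FF 1) * c (k+1) = 2*(FF (k+3) - FF (k+2)))
      ∧ ((3*FF 1 - 2*FF 0) * d (k+2) - (2*FF 0 - FF 1) * c (k+2) = 2*(FF (k+4) - FF (k+3)))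
      ∧ ((3*FF 1 - 2*FF 0) * d (k+3) - (2*FF 0 - FF 1) * c (k+3) = 2*(FF (k+5) - FF (k+4))) := by
  have hF2 : FF 2 = 2*FF 1 - 2*FF 0 := by have := FF_rec 0; norm_num at this; exact this
  have hF3 : FF 3 = 4*FF 2 - 2*FF 1 := by have := FF_rec 1; norm_num at this; exact this
  have hF4 : FF 4 = 6*FF 3 - 2*FF 2 := by have := FF_rec 2; norm_num at this; exact this
  have hF5 : FF 5 = 8*FF 4 - 2*FF 3 := by have := FF_rec 3; norm_num at this; exact this
  intro k
  induction k with
  | zero =>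
    refine ⟨?_, ?_, ?_⟩
    · norm_num [hd1, hc1]; rw [hF3, hF2]; ring
    · norm_num [hd2, hc2]; rw [hF4, hF3, hF2]; ring
    · norm_num [hd3, hc3]; rw [hF5, hF4, hF3, hF2]; ring
  | succ k ih =>
    obtain ⟨ih1, ih2, ih3⟩ := ih
    refine ⟨by simpa [show k+1+1 = k+2 from rfl] using ih2,
            by simpa [show k+1+2 = k+3 from rfl] using ih3, ?_⟩
    have hc := hcrec (k+4) (by omega)
    have hd := hdrec (k+4) (by omega)
    simp only [show k+4-1 = k+3 from rfl, show k+4-2 = k+2 from rfl,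
      show k+4-3 = k+1 from rfl] at hc hd
    push_cast at hc hd
    have h6 : FF (k+6) = (2*((k:ℝ)+4)+2)*FF (k+5) - 2*FF (k+4) := by
      have := FF_rec (k+4); push_cast at this
      simpa [show k+4+2 = k+6 from rfl, show k+4+1 = k+5 from rfl] using this
    have h5 : FF (k+5) = (2*((k:ℝ)+3)+2)*FF (k+4) - 2*FF (k+3) := by
      have := FF_rec (k+3); push_cast at this
      simpa [show k+3+2 = k+5 from rfl, show k+3+1 = k+4 from rfl] using this
    have h4 : FF (k+4) = (2*((k:ℝ)+2)+2)*FF (k+3) - 2*FF (k+2) := by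
      have := FF_rec (k+2); push_cast at this
      simpa [show k+2+2 = k+4 from rfl, show k+2+1 = k+3 from rfl] using this
    have h3 : FF (k+3) = (2*((k:ℝ)+1)+2)*FF (k+2) - 2*FF (k+1) := by
      have := FF_rec (k+1); push_cast at this
      simpa [show k+1+2 = k+3 from rfl, show k+1+1 = k+2 from rfl] using this
    show (3*FF 1 - 2*FF 0) * d (k+4) - (2*FF 0 - FF 1) * c (k+4) = 2*(FF (k+6) - FF (k+5))
    rw [hc, hd, h6, h5, h4, h3]
    rw [h5, h4, h3] at ih3
    rw [h4, h3] at ih2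
    rw [h3] at ih1
    linear_combination (2*(k:ℝ)+11) * ih3 - (2*(k:ℝ)+8) * ih2 + 2 * ih1

lemma cgrow (c : ℕ → ℝ)
    (hc1 : c 1 = 5) (hc2 : c 2 = 28) (hc3 : c 3 = 226)
    (hcrec : ∀ n : ℕ, 4 ≤ n →
      c n = (2 * (n : ℝ) + 3) * c (n - 1) - (2 * ((n : ℝ) - 2) + 4) * c (n - 2)
            + 2 * c (n - 3)) :
    ∀ k : ℕ, 0 < c (k+1) ∧ 0 < c (k+2) ∧ ((k:ℝ)+3 ≤ c (k+3)) ∧ c (k+2) ≤ c (k+3) := by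
  intro k
  induction k with
  | zero => norm_num [hc1, hc2, hc3]
  | succ k ih =>
    obtain ⟨ih1, ih2, ih3, ih4⟩ := ih
    have hk3 : (0:ℝ) < c (k+3) := lt_of_lt_of_le (by positivity) ih3
    have hc := hcrec (k+4) (by omega)
    simp only [show k+4-1 = k+3 from rfl, show k+4-2 = k+2 from rfl,
      show k+4-3 = k+1 from rfl] at hc
    push_cast at hc
    have hm : (2*(k:ℝ)+8) * c (k+2) ≤ (2*(k:ℝ)+8) * c (k+3) :=
      mul_le_mul_of_nonneg_left ih4 (by positivity)
    refine ⟨ih2, hk3, ?_, ?_⟩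
    · show ((k+1 : ℕ):ℝ)+3 ≤ c (k+4)
      push_cast
      have hk0 : (0:ℝ) ≤ (k:ℝ) := Nat.cast_nonneg k
      nlinarith
    · show c (k+3) ≤ c (k+4)
      nlinarith

end Stmt19Aux

open Stmt19Aux in
/-- For `λ = 0` (so `c₀=1, c₁=5, c₂=28, c₃=226`, `d₀=0, d₁=1, d₂=8, d₃=66`
and `x_n = (2n+3)x_{n−1} − (2(n−2)+4)x_{n−2} + 2x_{n−3}` for `n ≥ 4`),
`d_n/c_n → (J₀(√2) − J₁(√2)/√2)/(3J₁(√2)/√2 − J₀(√2))` as `n → ∞`. -/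
theorem stmt_19 (c d : ℕ → ℝ)
    (hc0 : c 0 = 1) (hc1 : c 1 = 5) (hc2 : c 2 = 28) (hc3 : c 3 = 226)
    (hd0 : d 0 = 0) (hd1 : d 1 = 1) (hd2 : d 2 = 8) (hd3 : d 3 = 66)
    (hcrec : ∀ n : ℕ, 4 ≤ n →
      c n = (2 * (n : ℝ) + 3) * c (n - 1) - (2 * ((n : ℝ) - 2) + 4) * c (n - 2)
            + 2 * c (n - 3))
    (hdrec : ∀ n : ℕ, 4 ≤ n →
      d n = (2 * (n : ℝ) + 3) * d (n - 1) - (2 * ((n : ℝ) - 2) + 4) * d (n - 2)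
            + 2 * d (n - 3)) :
    Filter.Tendsto (fun n : ℕ => d n / c n) Filter.atTop
      (nhds ((besselJ 0 (Real.sqrt 2) - besselJ 1 (Real.sqrt 2) / Real.sqrt 2) /
        (3 * besselJ 1 (Real.sqrt 2) / Real.sqrt 2 - besselJ 0 (Real.sqrt 2)))) := by
  have hkey := key_identity c d hc1 hc2 hc3 hd1 hd2 hd3 hcrec hdrec
  have hgr := cgrow c hc1 hc2 hc3 hcrec
  have hDD : (3:ℝ)/4 ≤ 3*FF 1 - 2*FF 0 := DD_pos
  have hDDpos : (0:ℝ) < 3*FF 1 - 2*FF 0 := by linarith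
  have hDDne : (3*FF 1 - 2*FF 0) ≠ 0 := ne_of_gt hDDpos
  have hs2 : Real.sqrt 2 ≠ 0 := ne_of_gt (Real.sqrt_pos.mpr (by norm_num))
  have hb1 : besselJ 1 (Real.sqrt 2) / Real.sqrt 2 = FF 1 / 2 := by
    rw [besselJ1_eq]
    field_simp
    try ring
  have hpoint : (besselJ 0 (Real.sqrt 2) - besselJ 1 (Real.sqrt 2) / Real.sqrt 2) /
        (3 * besselJ 1 (Real.sqrt 2) / Real.sqrt 2 - besselJ 0 (Real.sqrt 2))
      = (2*FF 0 - FF 1)/(3*FF 1 - 2*FF 0) := by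
    have h3 : 3 * besselJ 1 (Real.sqrt 2) / Real.sqrt 2 = 3*(FF 1/2) := by
      rw [mul_div_assoc, hb1]
    rw [h3, hb1, besselJ0_eq]
    have hden : 3*(FF 1/2) - FF 0 ≠ 0 := by
      have : 3*(FF 1/2) - FF 0 = (3*FF 1 - 2*FF 0)/2 := by ring
      rw [this]
      positivity
    rw [div_eq_div_iff hden hDDne]
    ring
  rw [hpoint]
  have htend : Filter.Tendsto
      (fun n : ℕ => (2*(FF (n+2) - FF (n+1)))/(3*FF 1 - 2*FF 0) / c n)
      Filter.atTop (nhds 0) := by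
    refine squeeze_zero_norm' (a := fun n : ℕ => (32/3 : ℝ) / n) ?_ ?_
    · filter_upwards [Filter.eventually_ge_atTop 3] with n hn
      obtain ⟨k, rfl⟩ : ∃ k, n = k+3 := ⟨n-3, by omega⟩
      have hcb : ((k:ℝ))+3 ≤ c (k+3) := (hgr k).2.2.1
      have hcpos : (0:ℝ) < c (k+3) := lt_of_lt_of_le (by positivity) hcb
      have hnum : |2*(FF (k+3+2) - FF (k+3+1))| ≤ 8 := by
        have b1 := abs_le.mp (FF_bound (k+3+2))
        have b2 := abs_le.mp (FF_bound (k+3+1))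
        rw [abs_le]
        constructor <;> [nlinarith [b1.1, b2.2]; nlinarith [b1.2, b2.1]]
      rw [Real.norm_eq_abs, abs_div, abs_div, abs_of_pos hcpos, abs_of_pos hDDpos]
      have hcast : ((k+3 : ℕ) : ℝ) = (k:ℝ) + 3 := by push_cast; ring
      rw [hcast]
      have h1 : |2*(FF (k+3+2) - FF (k+3+1))| / (3*FF 1 - 2*FF 0) ≤ 32/3 := by
        rw [div_le_iff₀ hDDpos]
        nlinarith [abs_nonneg (2*(FF (k+3+2) - FF (k+3+1)))]
      calc |2*(FF (k+3+2) - FF (k+3+1))| / (3*FF 1 - 2*FF 0) / c (k+3)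
          ≤ (32/3) / ((k:ℝ)+3) := by
            apply div_le_div₀ (by norm_num) h1 (by positivity) hcb
        _ = (32/3 : ℝ) / ((k:ℝ)+3) := rfl
    · exact tendsto_const_div_atTop_nhds_zero_nat _
  have hfin := htend.const_add ((2*FF 0 - FF 1)/(3*FF 1 - 2*FF 0))
  rw [add_zero] at hfin
  apply hfin.congr'
  filter_upwards [Filter.eventually_ge_atTop 3] with n hn
  obtain ⟨k, rfl⟩ : ∃ k, n = k+3 := ⟨n-3, by omega⟩
  have hid := (hkey k).2.2
  have hcb : ((k:ℝ))+3 ≤ c (k+3) := (hgr k).2.2.1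
  have hcpos : (0:ℝ) < c (k+3) := lt_of_lt_of_le (by positivity) hcb
  have hcne : c (k+3) ≠ 0 := ne_of_gt hcpos
  show (2*FF 0 - FF 1)/(3*FF 1 - 2*FF 0)
      + (2*(FF (k+3+2) - FF (k+3+1)))/(3*FF 1 - 2*FF 0) / c (k+3) = d (k+3) / c (k+3)
  have hid' : (3*FF 1 - 2*FF 0) * d (k+3) - (2*FF 0 - FF 1) * c (k+3)
      = 2*(FF (k+3+2) - FF (k+3+1)) := hid
  have hrepr : d (k+3) = (2*FF 0 - FF 1)/(3*FF 1 - 2*FF 0) * c (k+3)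
      + (2*(FF (k+3+2) - FF (k+3+1)))/(3*FF 1 - 2*FF 0) := by
    rw [div_mul_eq_mul_div, ← add_div, eq_comm, div_eq_iff hDDne]
    linarith [hid']
  rw [hrepr, add_div, mul_div_cancel_right₀ _ hcne]
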